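/- Consider the polytope over variables x_{αg} for edges (α,g) ∈ E ⊆ M' × G' defined by: agent constraints Σ_{α:(α,g)∈E} x_{αg} u_{gi}(α) ≥ c_{gi} for each group g in G' and agent i in g; good constraints Σ_{g:(α,g)∈E} x_{αg} = 1 for each α ∈ M'; and 0 ≤ x_{αg} ≤ 1. If M' is nonempty, then every basic feasible solution x* satisfies at least one of: (i) x*_{αg} ∈ {0,1} for some edge (α,g) ∈ E, or (ii) Σ_{α:(α,g)∈E} x*_{αg} ≤ |g| for some nonempty group g ∈ G'. -/

import Mathlib

open Finset

section Aux

variable {Goods Groups : Type*} [Fintype Goods] [Fintype Groups]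
    [DecidableEq Goods] [DecidableEq Groups]

lemma sum_E_fst {M : Type*} [AddCommMonoid M] (E : Finset (Goods × Groups))
    (f : Goods × Groups → M) :
    ∑ p ∈ E, f p = ∑ α : Goods, ∑ g ∈ univ.filter (fun g => (α, g) ∈ E), f (α, g) := by
  rw [← Finset.filter_univ_mem E, Finset.sum_filter, Fintype.sum_prod_type]
  simp [Finset.sum_filter]

lemma sum_E_snd {M : Type*} [AddCommMonoid M] (E : Finset (Goods × Groups))
    (f : Goods × Groups → M) :
    ∑ p ∈ E, f p = ∑ g : Groups, ∑ α ∈ univ.filter (fun α => (α, g) ∈ E), f (α, g) := by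
  rw [← Finset.filter_univ_mem E, Finset.sum_filter, Fintype.sum_prod_type_right]
  simp [Finset.sum_filter]

/-- extension of a function on `E` by zero -/
noncomputable def extE (E : Finset (Goods × Groups)) :
    (↥E → ℝ) →ₗ[ℝ] (Goods × Groups → ℝ) where
  toFun y p := if h : p ∈ E then y ⟨p, h⟩ else 0
  map_add' y z := by funext p; by_cases h : p ∈ E <;> simp [h]
  map_smul' c y := by funext p; by_cases h : p ∈ E <;> simp [h]

/-- the constraint map -/
noncomputable def conA (size : Groups → ℕ) (E : Finset (Goods × Groups))
    (u : (g : Groups) → Fin (size g) → Goods → ℝ) :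
    (Goods × Groups → ℝ) →ₗ[ℝ] ((Goods ⊕ (Σ g : Groups, Fin (size g))) → ℝ) where
  toFun z := Sum.elim
      (fun α => ∑ g ∈ univ.filter (fun g => (α, g) ∈ E), z (α, g))
      (fun gi => ∑ α ∈ univ.filter (fun α => (α, gi.1) ∈ E), z (α, gi.1) * u gi.1 gi.2 α)
  map_add' y z := by
    funext q
    rcases q with α | ⟨g, i⟩ <;> simp [Finset.sum_add_distrib, add_mul]
  map_smul' c y := by
    funext q
    rcases q with α | ⟨g, i⟩ <;> simp [Finset.mul_sum, mul_assoc]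

end Aux

/-- BFS lemma: if the set of goods is nonempty, every basic feasible solution (extreme
point) of the polytope with agent constraints, good constraints and edge bounds has an
integral coordinate on some edge, or some nonempty group has incident weight at most its
size. -/
theorem stmt_10 {Goods Groups : Type*} [Fintype Goods] [Fintype Groups]
    [DecidableEq Goods] [DecidableEq Groups] [Nonempty Goods]
    (size : Groups → ℕ)
    (E : Finset (Goods × Groups))
    (u : (g : Groups) → Fin (size g) → Goods → ℝ)
    (hu : ∀ g i a, 0 ≤ u g i a)
    (c : (g : Groups) → Fin (size g) → ℝ)
    (P : Set (Goods × Groups → ℝ))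
    (hP : P = {x | (∀ p, p ∉ E → x p = 0) ∧
      (∀ p ∈ E, 0 ≤ x p ∧ x p ≤ 1) ∧
      (∀ α : Goods, ∑ g ∈ Finset.univ.filter (fun g => (α, g) ∈ E), x (α, g) = 1) ∧
      (∀ (g : Groups) (i : Fin (size g)),
        c g i ≤ ∑ α ∈ Finset.univ.filter (fun α => (α, g) ∈ E), x (α, g) * u g i α)})
    (x : Goods × Groups → ℝ) (hx : x ∈ Set.extremePoints ℝ P) :
    (∃ p ∈ E, x p = 0 ∨ x p = 1) ∨
    (∃ g : Groups, 0 < size g ∧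
      ∑ α ∈ Finset.univ.filter (fun α => (α, g) ∈ E), x (α, g) ≤ (size g : ℝ)) := by
  by_contra hcon
  push_neg at hcon
  obtain ⟨h1, h2⟩ := hcon
  obtain ⟨hxP, hext⟩ := hx
  have hxP' := hxP
  rw [hP] at hxP'
  obtain ⟨hz, hb, hgood, hagent⟩ := hxP'
  -- all edge coordinates are strictly fractional
  have hfrac : ∀ p ∈ E, 0 < x p ∧ x p < 1 := by
    intro p hp
    obtain ⟨h0, h1'⟩ := hb p hp
    obtain ⟨hne0, hne1⟩ := h1 p hp
    exact ⟨lt_of_le_of_ne h0 (Ne.symm hne0), lt_of_le_of_ne h1' hne1⟩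
  -- each good has at least two incident edges
  have hcard2 : ∀ α : Goods, 2 ≤ (univ.filter (fun g => (α, g) ∈ E)).card := by
    intro α
    by_contra hlt
    push_neg at hlt
    have hsum := hgood α
    interval_cases h : (univ.filter (fun g => (α, g) ∈ E)).card
    · rw [Finset.card_eq_zero.mp h] at hsum
      simp at hsum
    · obtain ⟨g, hg⟩ := Finset.card_eq_one.mp h
      rw [hg, Finset.sum_singleton] at hsum
      have hgE : (α, g) ∈ E := by
        have : g ∈ univ.filter (fun g => (α, g) ∈ E) := by rw [hg]; simp
        simpa using this
      exact absurd hsum (ne_of_lt (hfrac _ hgE).2)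
  -- counting edges
  have hEcard : 2 * Fintype.card Goods ≤ E.card := by
    have : E.card = ∑ α : Goods, (univ.filter (fun g => (α, g) ∈ E)).card := by
      rw [Finset.card_eq_sum_ones, sum_E_fst E (fun _ => (1:ℕ))]
      exact Finset.sum_congr rfl fun α _ => (Finset.card_eq_sum_ones _).symm
    rw [this]
    calc 2 * Fintype.card Goods = ∑ _α : Goods, 2 := by
          simp [mul_comm]
      _ ≤ _ := Finset.sum_le_sum (fun α _ => hcard2 α)
  -- total weight
  have hT1 : ∑ p ∈ E, x p = (Fintype.card Goods : ℝ) := by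
    rw [sum_E_fst E x]
    simp [hgood]
  have hT2 : ∑ p ∈ E, x p = ∑ g : Groups, ∑ α ∈ univ.filter (fun α => (α, g) ∈ E), x (α, g) :=
    sum_E_snd E x
  have hwnn : ∀ g : Groups, 0 ≤ ∑ α ∈ univ.filter (fun α => (α, g) ∈ E), x (α, g) := by
    intro g
    refine Finset.sum_nonneg fun α hα => ?_
    exact (hb _ (by simpa using hα)).1
  -- sum of sizes is strictly less than number of goods
  have hsize : (∑ g : Groups, size g : ℝ) < (Fintype.card Goods : ℝ) := by
    rw [← hT1, hT2]
    push_cast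
    by_cases hex : ∃ g : Groups, 0 < size g
    · obtain ⟨g0, hg0⟩ := hex
      refine Finset.sum_lt_sum (fun g _ => ?_) ⟨g0, Finset.mem_univ g0, h2 g0 hg0⟩
      rcases Nat.eq_zero_or_pos (size g) with h | h
      · simp [h, hwnn g]
      · exact le_of_lt (h2 g h)
    · push_neg at hex
      have : ∀ g : Groups, size g = 0 := fun g => Nat.le_zero.mp (hex g)
      have h0 : (∑ g : Groups, (size g : ℝ)) = 0 := by simp [this]
      rw [h0, ← hT2, hT1]
      exact_mod_cast Fintype.card_pos
  have hsizeN : ∑ g : Groups, size g < Fintype.card Goods := by exact_mod_cast hsize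
  -- the constraint map is not injective on functions supported on E
  set L := (conA size E u).comp (extE E) with hL
  have hni : ¬ Function.Injective L := by
    intro hinj
    have hle := LinearMap.finrank_le_finrank_of_injective hinj
    rw [Module.finrank_pi, Module.finrank_pi] at hle
    rw [Fintype.card_coe, Fintype.card_sum, Fintype.card_sigma] at hle
    simp only [Fintype.card_fin] at hle
    omega
  rw [Function.not_injective_iff] at hni
  obtain ⟨y₁, y₂, hLeq, hyne⟩ := hni
  set y := y₁ - y₂ with hy
  have hLy : L y = 0 := by rw [hy, map_sub, hLeq, sub_self]
  have hyne0 : y ≠ 0 := sub_ne_zero.mpr hyne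
  set d : Goods × Groups → ℝ := extE E y with hd
  have hAd : conA size E u d = 0 := hLy
  have hd0 : ∀ p, p ∉ E → d p = 0 := by
    intro p hp
    simp [hd, extE, hp]
  have hdne : ∃ p : Goods × Groups, d p ≠ 0 := by
    obtain ⟨q, hq⟩ := Function.ne_iff.mp hyne0
    refine ⟨q.1, ?_⟩
    simp only [hd, extE, LinearMap.coe_mk, AddHom.coe_mk]
    rw [dif_pos q.2]
    simpa using hq
  have hdsum : ∀ α : Goods, ∑ g ∈ univ.filter (fun g => (α, g) ∈ E), d (α, g) = 0 := by
    intro α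
    have := congrFun hAd (Sum.inl α)
    simpa [conA] using this
  have hdu : ∀ (g : Groups) (i : Fin (size g)),
      ∑ α ∈ univ.filter (fun α => (α, g) ∈ E), d (α, g) * u g i α = 0 := by
    intro g i
    have := congrFun hAd (Sum.inr ⟨g, i⟩)
    simpa [conA] using this
  -- E is nonempty
  have hEne : E.Nonempty := by
    obtain ⟨α⟩ : Nonempty Goods := inferInstance
    have := hcard2 α
    have hpos : (univ.filter (fun g => (α, g) ∈ E)).Nonempty :=
      Finset.card_pos.mp (by omega)
    obtain ⟨g, hg⟩ := hpos
    exact ⟨(α, g), by simpa using hg⟩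
  -- choose epsilon
  set m : ℝ := E.inf' hEne (fun p => min (x p) (1 - x p)) with hm
  have hmpos : 0 < m := by
    rw [hm, Finset.lt_inf'_iff]
    intro p hp
    obtain ⟨h0, h1'⟩ := hfrac p hp
    exact lt_min h0 (by linarith)
  have hmle : ∀ p ∈ E, m ≤ min (x p) (1 - x p) := fun p hp => Finset.inf'_le _ hp
  set C : ℝ := ∑ p : Goods × Groups, |d p| with hC
  have hCnn : 0 ≤ C := Finset.sum_nonneg fun p _ => abs_nonneg _
  have hCle : ∀ p : Goods × Groups, |d p| ≤ C :=
    fun p => Finset.single_le_sum (fun q _ => abs_nonneg (d q)) (Finset.mem_univ p)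
  set ε : ℝ := m / (1 + C) with hε
  have hεpos : 0 < ε := div_pos hmpos (by linarith)
  have hkey : ∀ p : Goods × Groups, ε * |d p| ≤ m := by
    intro p
    have h1' : ε * |d p| ≤ ε * C := mul_le_mul_of_nonneg_left (hCle p) (le_of_lt hεpos)
    have h2' : ε * C ≤ m := by
      rw [hε, div_mul_eq_mul_div, div_le_iff₀ (by linarith : (0:ℝ) < 1 + C)]
      nlinarith
    linarith
  -- perturbations stay in P
  have hmem : ∀ s : ℝ, |s| ≤ ε → (fun p => x p + s * d p) ∈ P := by
    intro s hs
    rw [hP]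
    refine ⟨?_, ?_, ?_, ?_⟩
    · intro p hp
      show x p + s * d p = 0
      rw [hz p hp, hd0 p hp, mul_zero, add_zero]
    · intro p hp
      have habs : |s * d p| ≤ ε * |d p| := by
        rw [abs_mul]
        exact mul_le_mul_of_nonneg_right hs (abs_nonneg _)
      have h₁ : s * d p ≤ ε * |d p| := le_trans (le_abs_self _) habs
      have h₂ : -(ε * |d p|) ≤ s * d p := by
        have := neg_abs_le (s * d p)
        linarith
      have hk := hkey p
      have hml := hmle p hp
      have hm1 : m ≤ x p := le_trans hml (min_le_left _ _)
      have hm2 : m ≤ 1 - x p := le_trans hml (min_le_right _ _)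
      constructor
      · show 0 ≤ x p + s * d p
        linarith
      · show x p + s * d p ≤ 1
        linarith
    · intro α
      rw [Finset.sum_add_distrib, hgood α, ← Finset.mul_sum, hdsum α, mul_zero, add_zero]
    · intro g i
      have : ∑ α ∈ univ.filter (fun α => (α, g) ∈ E), (x (α, g) + s * d (α, g)) * u g i α
          = ∑ α ∈ univ.filter (fun α => (α, g) ∈ E), x (α, g) * u g i α
            + s * ∑ α ∈ univ.filter (fun α => (α, g) ∈ E), d (α, g) * u g i α := by
        rw [Finset.mul_sum, ← Finset.sum_add_distrib]
        exact Finset.sum_congr rfl fun α _ => by ring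
      rw [this, hdu g i, mul_zero, add_zero]
      exact hagent g i
  have h₁ := hmem ε (by rw [abs_of_pos hεpos])
  have h₂ := hmem (-ε) (by rw [abs_neg, abs_of_pos hεpos])
  have hseg : x ∈ openSegment ℝ (fun p => x p + ε * d p) (fun p => x p + (-ε) * d p) := by
    refine ⟨1/2, 1/2, by norm_num, by norm_num, by norm_num, ?_⟩
    funext p
    simp only [Pi.add_apply, Pi.smul_apply, smul_eq_mul]
    ring
  have heq := hext h₁ h₂ hseg
  obtain ⟨p, hpne⟩ := hdne
  have : x p + ε * d p = x p := congrFun heq p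
  have : ε * d p = 0 := by linarith
  rcases mul_eq_zero.mp this with h | h
  · exact absurd h (ne_of_gt hεpos)
  · exact hpne h
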